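/- Let R and S be rings and P, Q be (R, S)-bimodules. Every natural transformation c : − ⊗_R P ⟹ − ⊗_R Q between the functors Mod_R → Mod_S is given by tensoring with a single (R, S)-bimodule homomorphism c_R(1 ⊗ −) : P → Q; that is, c_M(m ⊗ p) = m ⊗ c(p) for all right R-modules M. -/

import Mathlib

open TensorProduct

namespace NCTensor

variable (R S : Type) [Ring R] [Ring S]

/-- The balancing relations `m·r ⊗ p - m ⊗ r·p` inside `M ⊗[ℤ] P`. -/
def balRel (M P : Type) [AddCommGroup M] [Module Rᵐᵒᵖ M] [AddCommGroup P] [Module R P] :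
    Submodule ℤ (M ⊗[ℤ] P) :=
  Submodule.span ℤ
    {x | ∃ (m : M) (r : R) (p : P), x = (MulOpposite.op r • m) ⊗ₜ[ℤ] p - m ⊗ₜ[ℤ] (r • p)}

/-- The tensor product `M ⊗_R P` of a right `R`-module `M` and a left `R`-module `P` over
a (possibly noncommutative) ring `R`. -/
abbrev RTensor (M P : Type) [AddCommGroup M] [Module Rᵐᵒᵖ M] [AddCommGroup P] [Module R P] :
    Type :=
  (M ⊗[ℤ] P) ⧸ balRel R M P

variable {M N P Q : Type} [AddCommGroup M] [Module Rᵐᵒᵖ M] [AddCommGroup N] [Module Rᵐᵒᵖ N]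
  [AddCommGroup P] [Module R P] [AddCommGroup Q] [Module R Q]

/-- The class of the elementary tensor `m ⊗ p` in `M ⊗_R P`. -/
noncomputable def rmk (m : M) (p : P) : RTensor R M P :=
  Submodule.Quotient.mk (m ⊗ₜ[ℤ] p)

@[simp] lemma rmk_zero_right (m : M) : rmk R m (0 : P) = 0 := by
  simp [rmk]

@[simp] lemma rmk_add_right (m : M) (p p' : P) :
    rmk R m (p + p') = rmk R m p + rmk R m p' := by
  simp [rmk, TensorProduct.tmul_add, ← Submodule.Quotient.mk_add]

/-- Functoriality of `− ⊗_R P` in the right-module variable. -/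
noncomputable def rmap (f : M →ₗ[Rᵐᵒᵖ] N) : RTensor R M P →ₗ[ℤ] RTensor R N P :=
  Submodule.mapQ _ _ (TensorProduct.map f.toAddMonoidHom.toIntLinearMap LinearMap.id)
    (by
      unfold balRel
      rw [Submodule.span_le]
      rintro x ⟨m, r, p, rfl⟩
      simp only [SetLike.mem_coe, Submodule.mem_comap, map_sub, TensorProduct.map_tmul,
        AddMonoidHom.coe_toIntLinearMap, LinearMap.toAddMonoidHom_coe, LinearMap.id_coe,
        id_eq, map_smul]
      exact Submodule.subset_span ⟨f m, r, p, by
          exact (LinearMap.map_sub _ _ _).trans (by simp)⟩)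

@[simp] lemma rmap_rmk (f : M →ₗ[Rᵐᵒᵖ] N) (m : M) (p : P) :
    rmap R f (rmk R m p) = rmk R (f m) p := by
  simp only [rmap, rmk, Submodule.mapQ_apply, TensorProduct.map_tmul,
    AddMonoidHom.coe_toIntLinearMap, LinearMap.toAddMonoidHom_coe, LinearMap.id_coe, id_eq]
  rfl

variable [Module Sᵐᵒᵖ P] [SMulCommClass R Sᵐᵒᵖ P] [Module Sᵐᵒᵖ Q] [SMulCommClass R Sᵐᵒᵖ Q]

/-- The right `S`-action on `M ⊗_R P` induced by the right `S`-action on `P`. -/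
noncomputable def actAux (s : Sᵐᵒᵖ) : RTensor R M P →ₗ[ℤ] RTensor R M P :=
  Submodule.mapQ _ _
    (TensorProduct.map LinearMap.id (DistribMulAction.toAddMonoidHom P s).toIntLinearMap)
    (by
      unfold balRel
      rw [Submodule.span_le]
      rintro x ⟨m, r, p, rfl⟩
      simp only [SetLike.mem_coe, Submodule.mem_comap, map_sub, TensorProduct.map_tmul,
        AddMonoidHom.coe_toIntLinearMap, DistribMulAction.toAddMonoidHom_apply,
        LinearMap.id_coe, id_eq]
      refine Submodule.subset_span ⟨m, r, s • p, ?_⟩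
      refine (LinearMap.map_sub _ _ _).trans ?_
      simp only [TensorProduct.map_tmul, AddMonoidHom.coe_toIntLinearMap, DistribMulAction.toAddMonoidHom_apply,
        LinearMap.id_coe, id_eq]
      rw [smul_comm r s p])

@[simp] lemma actAux_rmk (s : Sᵐᵒᵖ) (m : M) (p : P) :
    actAux R S s (rmk R m p) = rmk R m (s • p) := by
  simp only [actAux, rmk, Submodule.mapQ_apply, TensorProduct.map_tmul,
    AddMonoidHom.coe_toIntLinearMap, DistribMulAction.toAddMonoidHom_apply,
    LinearMap.id_coe, id_eq]
  rfl

lemma hom_ext {A : Type} [AddCommGroup A]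
    {f g : RTensor R M P →ₗ[ℤ] A} (h : ∀ m p, f (rmk R m p) = g (rmk R m p)) : f = g := by
  refine LinearMap.ext fun x => ?_
  obtain ⟨y, rfl⟩ := Submodule.Quotient.mk_surjective _ x
  induction y using TensorProduct.induction_on with
  | zero => rw [Submodule.Quotient.mk_zero, map_zero, map_zero]
  | tmul m p => exact h m p
  | add a b ha hb => rw [Submodule.Quotient.mk_add, map_add, map_add, ha, hb]

/-- The right `S`-action on `M ⊗_R P` as a ring homomorphism into endomorphisms. -/
noncomputable def actHom : Sᵐᵒᵖ →+* Module.End ℤ (RTensor R M P) where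
  toFun := actAux R S
  map_one' := hom_ext R (fun m p => by simp)
  map_mul' s t := hom_ext R (fun m p => by simp [Module.End.mul_apply, mul_smul])
  map_zero' := hom_ext R (fun m p => by simp)
  map_add' s t := hom_ext R (fun m p => by simp [LinearMap.add_apply, add_smul])

/-- `M ⊗_R P` is a right `S`-module. -/
noncomputable instance : Module Sᵐᵒᵖ (RTensor R M P) :=
  Module.compHom _ (actHom R S (M := M) (P := P))

@[simp] lemma smul_rmk (s : Sᵐᵒᵖ) (m : M) (p : P) :
    s • rmk R m p = rmk R m (s • p) :=
  actAux_rmk R S s m p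

end NCTensor

open NCTensor

section Aux
open NCTensor
variable (R : Type) [Ring R]
variable {M P Q : Type} [AddCommGroup M] [Module Rᵐᵒᵖ M]
  [AddCommGroup P] [Module R P] [AddCommGroup Q] [Module R Q]

lemma rmk_op_smul (r : R) (m : M) (p : P) :
    rmk R (MulOpposite.op r • m) p = rmk R m (r • p) := by
  rw [rmk, rmk, Submodule.Quotient.eq]
  exact Submodule.subset_span ⟨m, r, p, rfl⟩

/-- ℤ-bilinear smul map. -/
noncomputable def smulBil : R →ₗ[ℤ] Q →ₗ[ℤ] Q where
  toFun r := (DistribMulAction.toAddMonoidHom Q r).toIntLinearMap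
  map_add' r r' := by ext q; simp [add_smul]
  map_smul' n r := by
    ext q
    simp [mul_smul, Int.cast_smul_eq_zsmul]

noncomputable def unitQ : RTensor R R Q →ₗ[ℤ] Q :=
  Submodule.liftQ _ (TensorProduct.lift (smulBil R (Q := Q))) (by
    unfold balRel
    rw [Submodule.span_le]
    rintro x ⟨m, r, p, rfl⟩
    change TensorProduct.lift (smulBil R (Q := Q)) ((MulOpposite.op r • m) ⊗ₜ[ℤ] p - m ⊗ₜ[ℤ] (r • p)) = 0
    rw [map_sub, TensorProduct.lift.tmul, TensorProduct.lift.tmul]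
    simp [smulBil, mul_smul, MulOpposite.smul_eq_mul_unop])

@[simp] lemma unitQ_rmk (a : R) (q : Q) : unitQ R (rmk R a q) = a • q := rfl

noncomputable def rmkL (m : M) : Q →ₗ[ℤ] RTensor R M Q :=
  (balRel R M Q).mkQ ∘ₗ TensorProduct.mk ℤ M Q m

@[simp] lemma rmkL_apply (m : M) (q : Q) : rmkL R m q = rmk R m q := rfl

lemma rmap_eq_rmk_unitQ (f : R →ₗ[Rᵐᵒᵖ] M) (x : RTensor R R Q) :
    rmap R f x = rmk R (f 1) (unitQ R x) := by
  have := LinearMap.congr_fun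
    (hom_ext R (f := rmap (P := Q) R f) (g := rmkL R (f 1) ∘ₗ unitQ R)
      (fun a q => by
        simp only [rmap_rmk, LinearMap.comp_apply, unitQ_rmk, rmkL_apply]
        rw [← rmk_op_smul, ← map_smul]
        congr 2
        simp [MulOpposite.smul_eq_mul_unop])) x
  simpa using this

variable (S : Type) [Ring S] [Module Sᵐᵒᵖ Q] [SMulCommClass R Sᵐᵒᵖ Q]

lemma unitQ_smul (s : Sᵐᵒᵖ) (x : RTensor R R Q) :
    unitQ R (s • x) = s • unitQ R x := by
  have := LinearMap.congr_fun
    (hom_ext R (f := (unitQ R (Q := Q)) ∘ₗ actAux R S s)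
      (g := (DistribMulAction.toAddMonoidHom Q s).toIntLinearMap ∘ₗ unitQ R (Q := Q))
      (fun a q => by
        simp only [LinearMap.comp_apply, actAux_rmk, unitQ_rmk,
          AddMonoidHom.coe_toIntLinearMap, DistribMulAction.toAddMonoidHom_apply]
        exact smul_comm a s q)) x
  exact this

end Aux


/-- Let `R`, `S` be rings and `P`, `Q` be `(R,S)`-bimodules.  Every natural transformation
`c : − ⊗_R P ⟹ − ⊗_R Q` between the induced functors `Mod_R ⥤ Mod_S` (a family of right
`S`-module maps `c_M : M ⊗_R P → M ⊗_R Q`, natural in the right `R`-module `M`) is given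
by tensoring with a single bimodule homomorphism `φ = c_R(1 ⊗ −) : P → Q`, i.e. `φ` is
both left `R`-linear and right `S`-linear and `c_M(m ⊗ p) = m ⊗ φ(p)` for every `M`. -/
theorem natural_transformation_of_tensor_functors_is_tensor_bimodule_hom
    (R S : Type) [Ring R] [Ring S]
    (P Q : Type) [AddCommGroup P] [Module R P] [Module Sᵐᵒᵖ P] [SMulCommClass R Sᵐᵒᵖ P]
    [AddCommGroup Q] [Module R Q] [Module Sᵐᵒᵖ Q] [SMulCommClass R Sᵐᵒᵖ Q]
    (c : ∀ (M : Type) [AddCommGroup M] [Module Rᵐᵒᵖ M],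
      RTensor R M P →ₗ[Sᵐᵒᵖ] RTensor R M Q)
    (hnat : ∀ (M N : Type) [AddCommGroup M] [Module Rᵐᵒᵖ M] [AddCommGroup N]
      [Module Rᵐᵒᵖ N] (f : M →ₗ[Rᵐᵒᵖ] N) (x : RTensor R M P),
        c N (rmap R f x) = rmap R f (c M x)) :
    ∃ φ : P →ₗ[R] Q, (∀ (s : Sᵐᵒᵖ) (p : P), φ (s • p) = s • φ p) ∧
      ∀ (M : Type) [AddCommGroup M] [Module Rᵐᵒᵖ M] (m : M) (p : P),
        c M (rmk R m p) = rmk R m (φ p) := by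
  classical
  set φ0 : P → Q := fun p => unitQ R (c R (rmk R (1 : R) p)) with hφ0
  have key : ∀ (M : Type) [AddCommGroup M] [Module Rᵐᵒᵖ M] (m : M) (p : P),
      c M (rmk R m p) = rmk R m (φ0 p) := by
    intro M _ _ m p
    let f : R →ₗ[Rᵐᵒᵖ] M :=
      { toFun := fun r => MulOpposite.op r • m
        map_add' := by intro a b; simp [add_smul]
        map_smul' := by
          intro a r
          simp [MulOpposite.smul_eq_mul_unop, mul_smul] }
    have hf1 : f 1 = m := by simp [f]
    have h1 : rmap R f (rmk R (1 : R) p) = rmk R m p := by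
      rw [rmap_rmk, hf1]
    calc c M (rmk R m p) = c M (rmap R f (rmk R (1:R) p)) := by rw [h1]
      _ = rmap R f (c R (rmk R (1:R) p)) := hnat R M f _
      _ = rmk R (f 1) (φ0 p) := rmap_eq_rmk_unitQ R f _
      _ = rmk R m (φ0 p) := by rw [hf1]
  have hadd : ∀ p p', φ0 (p + p') = φ0 p + φ0 p' := by
    intro p p'
    simp [hφ0, rmk_add_right, map_add]
  have hRsmul : ∀ (r : R) (p : P), φ0 (r • p) = r • φ0 p := by
    intro r p
    have h1 : c R (rmk R (1:R) (r • p)) = rmk R r (φ0 p) := by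
      rw [← rmk_op_smul R r (1:R) p, key R (MulOpposite.op r • (1:R)) p]
      congr 1
      simp [MulOpposite.smul_eq_mul_unop]
    simp [hφ0, h1]
  have hSsmul : ∀ (s : Sᵐᵒᵖ) (p : P), φ0 (s • p) = s • φ0 p := by
    intro s p
    have h1 : c R (rmk R (1:R) (s • p)) = s • c R (rmk R (1:R) p) := by
      rw [← smul_rmk, map_smul]
    rw [hφ0]
    simp only [h1]
    exact unitQ_smul R S s _
  refine ⟨{ toFun := φ0, map_add' := hadd, map_smul' := hRsmul }, hSsmul, key⟩
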